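/- arXiv:1508.00690 — 6 statements merged into one kernel-verified Lean document; each statement's English description precedes it below -/
import Mathlib

section
/- Let F be a field, d ≥ 1, and A ≤ M(n,F) ⊗ M(d,F) a subspace satisfying (I ⊗ M(d,F)) A (I ⊗ M(d,F)) = A. If A has an s-shrunk subspace U ≤ F^n ⊗ F^d, then the subspace U' spanned by (I ⊗ M(d,F)) U is an s'-shrunk subspace for A with s' ≥ s and d | s'; moreover U' = U₀ ⊗ F^d for some U₀ ≤ F^n. -/
open Matrix Module Kronecker

namespace Stmt6Aux
variable {F : Type*} [Field F] {n d : ℕ}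

/-- slice at column `j`. -/
noncomputable def slice (j : Fin d) : (Fin n × Fin d → F) →ₗ[F] (Fin n → F) :=
  LinearMap.funLeft F F (fun i => (i, j))

lemma slice_apply (j : Fin d) (w : Fin n × Fin d → F) :
    slice j w = fun i => w (i, j) := rfl

lemma kron_mulVec (Y : Matrix (Fin d) (Fin d) F) (w : Fin n × Fin d → F) (p : Fin n × Fin d) :
    ((1 : Matrix (Fin n) (Fin n) F) ⊗ₖ Y).mulVec w p = ∑ l, Y p.2 l * w (p.1, l) := by
  obtain ⟨i, k⟩ := p
  simp [Matrix.mulVec, dotProduct, Fintype.sum_prod_type,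
    Matrix.kroneckerMap_apply, Matrix.one_apply, ite_mul, Finset.sum_ite_eq]

theorem invariant_struct (hd : 1 ≤ d) (W : Submodule F (Fin n × Fin d → F))
    (hW : ∀ (Y : Matrix (Fin d) (Fin d) F), ∀ w ∈ W,
      ((1 : Matrix (Fin n) (Fin n) F) ⊗ₖ Y).mulVec w ∈ W) :
    ∃ W₀ : Submodule F (Fin n → F),
      W = Submodule.span F {v : Fin n × Fin d → F |
            ∃ u₀ ∈ W₀, ∃ e : Fin d → F, v = fun p => u₀ p.1 * e p.2}
      ∧ finrank F W = d * finrank F W₀ := by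
  have j₀ : Fin d := ⟨0, hd⟩
  set W₀ : Submodule F (Fin n → F) := W.map (slice j₀) with hW₀
  have hsl : ∀ w ∈ W, ∀ j : Fin d, (slice j w : Fin n → F) ∈ W₀ := by
    intro w hw j
    refine ⟨((1 : Matrix (Fin n) (Fin n) F) ⊗ₖ Matrix.single j₀ j (1:F)).mulVec w,
      hW _ _ hw, ?_⟩
    funext i
    show ((1 : Matrix (Fin n) (Fin n) F) ⊗ₖ _).mulVec w (i, j₀) = w (i, j)
    rw [kron_mulVec]
    simp [Matrix.single, ite_mul, Finset.sum_ite_eq]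
  have hpure : ∀ u₀ ∈ W₀, ∀ e : Fin d → F, (fun p : Fin n × Fin d => u₀ p.1 * e p.2) ∈ W := by
    rintro u₀ ⟨w, hw, rfl⟩ e
    have := hW (Matrix.of fun k l => e k * (if l = j₀ then (1:F) else 0)) w hw
    convert this using 1
    funext p
    rw [kron_mulVec]
    simp [slice_apply, mul_assoc, ite_mul, Finset.sum_ite_eq', mul_comm]
  have hdecomp : ∀ w : Fin n × Fin d → F,
      w = ∑ j : Fin d, (fun p : Fin n × Fin d =>
        (slice j w : Fin n → F) p.1 * (if p.2 = j then (1:F) else 0)) := by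
    intro w
    funext p
    rw [Finset.sum_apply]
    simp [slice_apply, mul_ite, Finset.sum_ite_eq']
  refine ⟨W₀, ?_, ?_⟩
  · apply le_antisymm
    · intro w hw
      rw [hdecomp w]
      exact Submodule.sum_mem _ fun j _ => Submodule.subset_span
        ⟨slice j w, hsl w hw j, fun k => if k = j then (1:F) else 0, rfl⟩
    · rw [Submodule.span_le]
      rintro v ⟨u₀, hu₀, e, rfl⟩
      exact hpure u₀ hu₀ e
  · have e : W ≃ₗ[F] (Fin d → W₀) :=
      { toFun := fun w => fun j => ⟨slice j w.1, hsl w.1 w.2 j⟩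
        invFun := fun f => ⟨fun p => (f p.2).1 p.1, by
          have : (fun p : Fin n × Fin d => (f p.2).1 p.1)
              = ∑ j : Fin d, (fun p : Fin n × Fin d =>
                (f j).1 p.1 * (if p.2 = j then (1:F) else 0)) := by
            funext p
            rw [Finset.sum_apply]
            simp [mul_ite, Finset.sum_ite_eq']
          rw [this]
          exact Submodule.sum_mem _ fun j _ =>
            hpure _ (f j).2 (fun k => if k = j then (1:F) else 0)⟩
        map_add' := by intro x y; rfl
        map_smul' := by intro c x; rfl
        left_inv := by intro w; ext p; rfl
        right_inv := by intro f; ext j i; rfl }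
    rw [e.finrank_eq, Module.finrank_pi_fintype, Finset.sum_const, Finset.card_univ,
      Fintype.card_fin, smul_eq_mul]

end Stmt6Aux

/-- If `𝓐 ≤ M(n,F) ⊗ M(d,F)` satisfies `(I ⊗ M(d,F)) 𝓐 (I ⊗ M(d,F)) = 𝓐` and
has an `s`-shrunk subspace `U`, then the span `U'` of `(I ⊗ M(d,F)) U` is an
`s'`-shrunk subspace with `s' ≥ s` divisible by `d`, and `U' = U₀ ⊗ F^d` for
some `U₀ ≤ F^n`. -/
theorem stmt6 {F : Type*} [Field F] {n d : ℕ} (hd : 1 ≤ d)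
    (𝓐 : Submodule F (Matrix (Fin n × Fin d) (Fin n × Fin d) F))
    (hbimod : Submodule.span F
      {M : Matrix (Fin n × Fin d) (Fin n × Fin d) F |
        ∃ X : Matrix (Fin d) (Fin d) F, ∃ A ∈ 𝓐, ∃ Y : Matrix (Fin d) (Fin d) F,
          M = ((1 : Matrix (Fin n) (Fin n) F) ⊗ₖ X) * A *
              ((1 : Matrix (Fin n) (Fin n) F) ⊗ₖ Y)} = 𝓐)
    (s : ℕ) (U : Submodule F (Fin n × Fin d → F))
    (hshrunk : finrank F (Submodule.span F
        {w : Fin n × Fin d → F | ∃ A ∈ 𝓐, ∃ u ∈ U, w = A.mulVec u}) + s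
      ≤ finrank F U) :
    ∃ s' : ℕ, s ≤ s' ∧ d ∣ s' ∧
      (finrank F (Submodule.span F
          {w : Fin n × Fin d → F | ∃ A ∈ 𝓐, ∃ u ∈
            Submodule.span F {u' : Fin n × Fin d → F |
              ∃ Y : Matrix (Fin d) (Fin d) F, ∃ v ∈ U,
                u' = ((1 : Matrix (Fin n) (Fin n) F) ⊗ₖ Y).mulVec v},
            w = A.mulVec u}) + s'
        ≤ finrank F (Submodule.span F {u' : Fin n × Fin d → F |
            ∃ Y : Matrix (Fin d) (Fin d) F, ∃ v ∈ U,
              u' = ((1 : Matrix (Fin n) (Fin n) F) ⊗ₖ Y).mulVec v})) ∧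
      (∃ U₀ : Submodule F (Fin n → F),
        Submodule.span F {u' : Fin n × Fin d → F |
            ∃ Y : Matrix (Fin d) (Fin d) F, ∃ v ∈ U,
              u' = ((1 : Matrix (Fin n) (Fin n) F) ⊗ₖ Y).mulVec v}
          = Submodule.span F {v : Fin n × Fin d → F |
              ∃ u₀ ∈ U₀, ∃ e : Fin d → F, v = fun p => u₀ p.1 * e p.2}) := by
  classical
  set S : Set (Fin n × Fin d → F) := {u' : Fin n × Fin d → F |
      ∃ Y : Matrix (Fin d) (Fin d) F, ∃ v ∈ U,
        u' = ((1 : Matrix (Fin n) (Fin n) F) ⊗ₖ Y).mulVec v} with hS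
  set U' : Submodule F (Fin n × Fin d → F) := Submodule.span F S with hU'
  set T : Set (Fin n × Fin d → F) :=
      {w : Fin n × Fin d → F | ∃ A ∈ 𝓐, ∃ u ∈ U, w = A.mulVec u} with hT
  set T' : Set (Fin n × Fin d → F) :=
      {w : Fin n × Fin d → F | ∃ A ∈ 𝓐, ∃ u ∈ U', w = A.mulVec u} with hT'
  -- membership facts about 𝓐
  have hmemA : ∀ (X Y : Matrix (Fin d) (Fin d) F), ∀ A ∈ 𝓐,
      ((1 : Matrix (Fin n) (Fin n) F) ⊗ₖ X) * A *
        ((1 : Matrix (Fin n) (Fin n) F) ⊗ₖ Y) ∈ 𝓐 := by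
    intro X Y A hA
    rw [← hbimod]
    exact Submodule.subset_span ⟨X, A, hA, Y, rfl⟩
  have hAr : ∀ (Y : Matrix (Fin d) (Fin d) F), ∀ A ∈ 𝓐,
      A * ((1 : Matrix (Fin n) (Fin n) F) ⊗ₖ Y) ∈ 𝓐 := by
    intro Y A hA
    have := hmemA 1 Y A hA
    rwa [Matrix.one_kronecker_one, one_mul] at this
  have hAl : ∀ (Y : Matrix (Fin d) (Fin d) F), ∀ A ∈ 𝓐,
      ((1 : Matrix (Fin n) (Fin n) F) ⊗ₖ Y) * A ∈ 𝓐 := by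
    intro Y A hA
    have := hmemA Y 1 A hA
    rwa [Matrix.one_kronecker_one, mul_one] at this
  -- U ≤ U'
  have hUle : U ≤ U' := by
    intro v hv
    exact Submodule.subset_span ⟨1, v, hv, by
      rw [Matrix.one_kronecker_one, Matrix.one_mulVec]⟩
  -- U' is invariant
  have hU'inv : ∀ (Y : Matrix (Fin d) (Fin d) F), ∀ u ∈ U',
      ((1 : Matrix (Fin n) (Fin n) F) ⊗ₖ Y).mulVec u ∈ U' := by
    intro Y u hu
    have : U' ≤ Submodule.comap
        (Matrix.mulVecLin ((1 : Matrix (Fin n) (Fin n) F) ⊗ₖ Y)) U' := by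
      rw [hU', Submodule.span_le]
      rintro w ⟨Y', v, hv, rfl⟩
      show Matrix.mulVecLin _ _ ∈ U'
      rw [Matrix.mulVecLin_apply, Matrix.mulVec_mulVec, ← Matrix.mul_kronecker_mul, one_mul]
      exact Submodule.subset_span ⟨Y * Y', v, hv, rfl⟩
    exact this hu
  -- span T is invariant
  have hWinv : ∀ (Y : Matrix (Fin d) (Fin d) F), ∀ w ∈ Submodule.span F T,
      ((1 : Matrix (Fin n) (Fin n) F) ⊗ₖ Y).mulVec w ∈ Submodule.span F T := by
    intro Y w hw
    have : Submodule.span F T ≤ Submodule.comap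
        (Matrix.mulVecLin ((1 : Matrix (Fin n) (Fin n) F) ⊗ₖ Y)) (Submodule.span F T) := by
      rw [Submodule.span_le]
      rintro x ⟨A, hA, u, hu, rfl⟩
      show Matrix.mulVecLin _ _ ∈ Submodule.span F T
      rw [Matrix.mulVecLin_apply, Matrix.mulVec_mulVec]
      exact Submodule.subset_span ⟨_, hAl Y A hA, u, hu, rfl⟩
    exact this hw
  -- span T' = span T
  have hTT' : Submodule.span F T' = Submodule.span F T := by
    apply le_antisymm
    · rw [Submodule.span_le]
      rintro w ⟨A, hA, u, hu, rfl⟩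
      have : U' ≤ Submodule.comap (Matrix.mulVecLin A) (Submodule.span F T) := by
        rw [hU', Submodule.span_le]
        rintro x ⟨Y, v, hv, rfl⟩
        show Matrix.mulVecLin _ _ ∈ Submodule.span F T
        rw [Matrix.mulVecLin_apply, Matrix.mulVec_mulVec]
        exact Submodule.subset_span ⟨_, hAr Y A hA, v, hv, rfl⟩
      have := this hu
      rwa [Submodule.mem_comap, Matrix.mulVecLin_apply] at this
    · apply Submodule.span_mono
      rintro w ⟨A, hA, u, hu, rfl⟩
      exact ⟨A, hA, u, hUle hu, rfl⟩
  obtain ⟨U₀, hU₀span, hU₀rank⟩ := Stmt6Aux.invariant_struct hd U' hU'inv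
  obtain ⟨W₀, -, hW₀rank⟩ := Stmt6Aux.invariant_struct hd (Submodule.span F T) hWinv
  set a := finrank F U₀
  set b := finrank F W₀
  have hUU' : finrank F U ≤ finrank F U' := Submodule.finrank_mono hUle
  have key : d * b + s ≤ d * a := by
    rw [← hW₀rank, ← hU₀rank]
    exact le_trans hshrunk hUU'
  have hba : b ≤ a := Nat.le_of_mul_le_mul_left (show d * b ≤ d * a by omega) (by omega)
  refine ⟨d * a - d * b, by omega, ⟨a - b, by rw [Nat.mul_sub]⟩, ?_, U₀, hU₀span⟩
  · show finrank F (Submodule.span F T') + (d * a - d * b) ≤ finrank F U'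
    rw [hTT', hW₀rank, hU₀rank]
    omega
end

section
/- Let F be a field, A ∈ B ≤ M(n,F), and let W* be the limit of the second Wong sequence W₀ = 0, W_i = B(A^{-1}(W_{i-1})). If W* ⊆ im(A), then A^{-1}(W*) is a cork(A)-shrunk subspace of B, where cork(A) = n − rk(A); that is, dim(B(A^{-1}(W*))) ≤ dim(A^{-1}(W*)) − (n − rk(A)). -/
open Matrix Module

set_option synthInstance.maxHeartbeats 1000000
set_option maxHeartbeats 1000000

/-- If the limit `W*` of the second Wong sequence of `(A, 𝓑)` (a fixed point
`W* = 𝓑(A⁻¹(W*))`) is contained in `im(A)`, then `A⁻¹(W*)` is a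
`cork(A)`-shrunk subspace of `𝓑`. -/
theorem stmt8 {F : Type*} [Field F] {n : ℕ}
    (𝓑 : Submodule F (Matrix (Fin n) (Fin n) F)) (A : Matrix (Fin n) (Fin n) F)
    (hA : A ∈ 𝓑) (Wstar : Submodule F (Fin n → F))
    (hfix : Wstar = Submodule.span F
      {w : Fin n → F | ∃ B ∈ 𝓑, ∃ v ∈ Submodule.comap A.mulVecLin Wstar, w = B.mulVec v})
    (him : Wstar ≤ LinearMap.range A.mulVecLin) :
    finrank F (Submodule.span F
        {w : Fin n → F | ∃ B ∈ 𝓑, ∃ v ∈ Submodule.comap A.mulVecLin Wstar, w = B.mulVec v})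
      + (n - A.rank)
      ≤ finrank F (Submodule.comap A.mulVecLin Wstar) := by
  rw [← hfix]
  set f := A.mulVecLin with hf
  set p := Submodule.comap f Wstar with hp
  -- ker f ≤ p
  have hker : LinearMap.ker f ≤ p := by
    intro x hx
    simp only [hp, Submodule.mem_comap]
    rw [LinearMap.mem_ker.mp hx]
    exact Wstar.zero_mem
  -- map f p = Wstar
  have hmap : Submodule.map f p = Wstar := by
    apply le_antisymm
    · rintro _ ⟨x, hx, rfl⟩; exact hx
    · intro w hw
      obtain ⟨v, hv⟩ := him hw
      exact ⟨v, by simp [hp, Submodule.mem_comap, hv, hw], hv⟩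
  -- rank-nullity for domRestrict
  have h1 := LinearMap.finrank_range_add_finrank_ker (f.domRestrict p)
  rw [LinearMap.range_domRestrict, hmap, LinearMap.ker_domRestrict] at h1
  have h2 : finrank F (Submodule.comap p.subtype (LinearMap.ker f))
      = finrank F (LinearMap.ker f) :=
    (Submodule.comapSubtypeEquivOfLe hker).finrank_eq
  have h3 := LinearMap.finrank_range_add_finrank_ker f
  rw [Module.finrank_fin_fun] at h3
  have hrank : A.rank = finrank F (LinearMap.range f) := rfl
  have hkerdim : finrank F (LinearMap.ker f) = n - A.rank := by omega
  have : finrank F Wstar + (n - A.rank) = finrank F p := by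
    rw [← hkerdim, ← h2]; exact h1
  omega
end

section
/- Let F be a field, A ∈ B ≤ M(n,F), and W* the limit of the second Wong sequence of (A,B). If B has a cork(A)-shrunk subspace, then W* ⊆ im(A). Conversely, if W* ⊆ im(A), then B has a cork(A)-shrunk subspace. (Equivalence of the two conditions.) -/
open Matrix Module

/-- The second Wong sequence of `(A, 𝓑)`: `W₀ = 0`, `W_{i+1} = 𝓑(A⁻¹(W_i))`. -/
def wongSeq {F : Type*} [Field F] {n : ℕ}
    (𝓑 : Submodule F (Matrix (Fin n) (Fin n) F)) (A : Matrix (Fin n) (Fin n) F) :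
    ℕ → Submodule F (Fin n → F)
  | 0 => ⊥
  | i + 1 => Submodule.span F
      {w : Fin n → F | ∃ B ∈ 𝓑, ∃ v : Fin n → F,
        A.mulVec v ∈ wongSeq 𝓑 A i ∧ w = B.mulVec v}

section Aux

variable {F : Type*} [Field F] {n : ℕ}
  (𝓑 : Submodule F (Matrix (Fin n) (Fin n) F)) (A : Matrix (Fin n) (Fin n) F)

/-- `𝓑(U)`. -/
def BUspan (U : Submodule F (Fin n → F)) : Submodule F (Fin n → F) :=
  Submodule.span F {w : Fin n → F | ∃ B ∈ 𝓑, ∃ u ∈ U, w = B.mulVec u}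

lemma BUspan_mono {U V : Submodule F (Fin n → F)} (h : U ≤ V) :
    BUspan 𝓑 U ≤ BUspan 𝓑 V := by
  apply Submodule.span_mono
  rintro w ⟨B, hB, u, hu, rfl⟩
  exact ⟨B, hB, u, h hu, rfl⟩

lemma wongSeq_succ (i : ℕ) :
    wongSeq 𝓑 A (i + 1) = BUspan 𝓑 ((wongSeq 𝓑 A i).comap A.mulVecLin) := by
  have hset : {w : Fin n → F | ∃ B ∈ 𝓑, ∃ v : Fin n → F,
        A.mulVec v ∈ wongSeq 𝓑 A i ∧ w = B.mulVec v}
      = {w : Fin n → F | ∃ B ∈ 𝓑, ∃ u ∈ (wongSeq 𝓑 A i).comap A.mulVecLin,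
        w = B.mulVec u} := by
    ext w
    simp only [Set.mem_setOf_eq, Submodule.mem_comap, Matrix.mulVecLin_apply]
  rw [wongSeq, hset, BUspan]

lemma map_le_BUspan (hA : A ∈ 𝓑) (U : Submodule F (Fin n → F)) :
    U.map A.mulVecLin ≤ BUspan 𝓑 U := by
  rintro w hw
  obtain ⟨u, hu, rfl⟩ := hw
  exact Submodule.subset_span ⟨A, hA, u, hu, rfl⟩

lemma wongSeq_mono (i : ℕ) : wongSeq 𝓑 A i ≤ wongSeq 𝓑 A (i + 1) := by
  induction i with
  | zero => exact bot_le
  | succ i ih =>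
    rw [wongSeq_succ, wongSeq_succ]
    exact BUspan_mono 𝓑 (Submodule.comap_mono ih)

lemma wongSeq_stab {i j : ℕ} (hij : i ≤ j)
    (h : wongSeq 𝓑 A i = wongSeq 𝓑 A (i + 1)) :
    wongSeq 𝓑 A j = wongSeq 𝓑 A (j + 1) := by
  induction j, hij using Nat.le_induction with
  | base => exact h
  | succ j _ ih =>
    calc wongSeq 𝓑 A (j + 1) = BUspan 𝓑 ((wongSeq 𝓑 A j).comap A.mulVecLin) :=
          wongSeq_succ 𝓑 A j
      _ = BUspan 𝓑 ((wongSeq 𝓑 A (j + 1)).comap A.mulVecLin) := by rw [← ih]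
      _ = wongSeq 𝓑 A (j + 2) := (wongSeq_succ 𝓑 A (j + 1)).symm

lemma wongSeq_n_stable : wongSeq 𝓑 A n = wongSeq 𝓑 A (n + 1) := by
  by_contra h
  have key : ∀ i, i ≤ n + 1 → i ≤ finrank F (wongSeq 𝓑 A i) := by
    intro i
    induction i with
    | zero => intro _; exact Nat.zero_le _
    | succ i ih =>
      intro hi
      have hne : wongSeq 𝓑 A i ≠ wongSeq 𝓑 A (i + 1) := by
        intro he
        exact h (wongSeq_stab 𝓑 A (by omega) he)
      have hlt : wongSeq 𝓑 A i < wongSeq 𝓑 A (i + 1) :=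
        lt_of_le_of_ne (wongSeq_mono 𝓑 A i) hne
      have h1 := Submodule.finrank_lt_finrank_of_lt hlt
      have h2 := ih (by omega)
      omega
  have h1 := key (n + 1) le_rfl
  have h2 : finrank F (wongSeq 𝓑 A (n + 1)) ≤ n := by
    have := Submodule.finrank_le (wongSeq 𝓑 A (n + 1))
    rwa [Module.finrank_fin_fun] at this
  omega

lemma finrank_map_add_inf_ker (f : (Fin n → F) →ₗ[F] (Fin n → F))
    (p : Submodule F (Fin n → F)) :
    finrank F (p.map f) + finrank F (p ⊓ LinearMap.ker f : Submodule F (Fin n → F))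
      = finrank F p := by
  have h := LinearMap.finrank_range_add_finrank_ker (f.domRestrict p)
  rw [LinearMap.range_domRestrict, LinearMap.ker_domRestrict] at h
  have h2 := Submodule.finrank_map_subtype_eq p ((LinearMap.ker f).comap p.subtype)
  rw [Submodule.map_comap_subtype] at h2
  rw [← h2] at h
  exact h

lemma finrank_ker_eq : finrank F (LinearMap.ker A.mulVecLin) = n - A.rank := by
  have h := LinearMap.finrank_range_add_finrank_ker A.mulVecLin
  rw [Module.finrank_fin_fun] at h
  have : A.rank = finrank F (LinearMap.range A.mulVecLin) := rfl
  omega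

end Aux

/-- `𝓑` has a `cork(A)`-shrunk subspace if and only if the limit `W*` of the
second Wong sequence of `(A, 𝓑)` (reached after at most `n` steps) is contained
in the image of `A`. -/
theorem stmt9 {F : Type*} [Field F] {n : ℕ}
    (𝓑 : Submodule F (Matrix (Fin n) (Fin n) F)) (A : Matrix (Fin n) (Fin n) F)
    (hA : A ∈ 𝓑) :
    (∃ U : Submodule F (Fin n → F),
      finrank F (Submodule.span F
          {w : Fin n → F | ∃ B ∈ 𝓑, ∃ u ∈ U, w = B.mulVec u}) + (n - A.rank)
        ≤ finrank F U) ↔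
    wongSeq 𝓑 A n ≤ LinearMap.range A.mulVecLin := by
  constructor
  · rintro ⟨U, hU⟩
    have hU' : finrank F (BUspan 𝓑 U) + finrank F (LinearMap.ker A.mulVecLin)
        ≤ finrank F U := by
      rw [finrank_ker_eq]; exact hU
    have hmap : U.map A.mulVecLin ≤ BUspan 𝓑 U := map_le_BUspan 𝓑 A hA U
    have hmapr := Submodule.finrank_mono hmap
    have h3 := finrank_map_add_inf_ker A.mulVecLin U
    have hinf_le : finrank F (U ⊓ LinearMap.ker A.mulVecLin : Submodule F (Fin n → F))
        ≤ finrank F (LinearMap.ker A.mulVecLin) :=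
      Submodule.finrank_mono inf_le_right
    have hinfeq : (U ⊓ LinearMap.ker A.mulVecLin : Submodule F (Fin n → F))
        = LinearMap.ker A.mulVecLin :=
      Submodule.eq_of_le_of_finrank_le inf_le_right (by omega)
    have hkerU : LinearMap.ker A.mulVecLin ≤ U := hinfeq ▸ inf_le_left
    have hBUeq : BUspan 𝓑 U = U.map A.mulVecLin := by
      rw [hinfeq] at h3
      exact (Submodule.eq_of_le_of_finrank_le hmap (by omega)).symm
    have hstep : ∀ i, wongSeq 𝓑 A i ≤ U.map A.mulVecLin := by
      intro i
      induction i with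
      | zero => exact bot_le
      | succ i ih =>
        rw [wongSeq_succ]
        calc BUspan 𝓑 ((wongSeq 𝓑 A i).comap A.mulVecLin)
            ≤ BUspan 𝓑 ((U.map A.mulVecLin).comap A.mulVecLin) :=
              BUspan_mono 𝓑 (Submodule.comap_mono ih)
          _ = BUspan 𝓑 (U ⊔ LinearMap.ker A.mulVecLin) := by
              rw [Submodule.comap_map_eq]
          _ = BUspan 𝓑 U := by rw [sup_eq_left.mpr hkerU]
          _ ≤ U.map A.mulVecLin := le_of_eq hBUeq
    exact (hstep n).trans LinearMap.map_le_range
  · intro hW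
    refine ⟨(wongSeq 𝓑 A n).comap A.mulVecLin, ?_⟩
    have hs : BUspan 𝓑 ((wongSeq 𝓑 A n).comap A.mulVecLin) = wongSeq 𝓑 A n :=
      (wongSeq_succ 𝓑 A n).symm.trans (wongSeq_n_stable 𝓑 A).symm
    show finrank F (BUspan 𝓑 ((wongSeq 𝓑 A n).comap A.mulVecLin)) + (n - A.rank)
        ≤ finrank F ((wongSeq 𝓑 A n).comap A.mulVecLin)
    rw [hs]
    have h3 := finrank_map_add_inf_ker A.mulVecLin ((wongSeq 𝓑 A n).comap A.mulVecLin)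
    have hker_le : LinearMap.ker A.mulVecLin ≤ (wongSeq 𝓑 A n).comap A.mulVecLin := by
      intro x hx
      simp only [Submodule.mem_comap, LinearMap.mem_ker.mp hx]
      exact Submodule.zero_mem _
    rw [Submodule.map_comap_eq_self hW, inf_eq_right.mpr hker_le,
      finrank_ker_eq] at h3
    omega
end

section
/- Let F be a field with |F| > r, let B₁,…,B_m ∈ M(k×ℓ, F), let K be a field extension of F, and S ⊆ F with |S| ≥ r+1. If there exist a₁',…,a_m' ∈ K such that the matrix Σ a_i' B_i (over K) has rank at least r, then there exist a₁,…,a_m ∈ S such that Σ a_i B_i has rank at least r over F. -/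
open Matrix

section Aux

variable {F : Type*} [Field F]

/-- If some `r × r` minor of `M` is nonzero, then `r ≤ M.rank`. -/
lemma aux_rank_ge_of_minor {k l r : ℕ} (M : Matrix (Fin k) (Fin l) F)
    (f : Fin r → Fin k) (g : Fin r → Fin l)
    (hdet : (M.submatrix f g).det ≠ 0) : r ≤ M.rank := by
  classical
  have hP : (1 : Matrix (Fin k) (Fin k) F).submatrix f id * M = M.submatrix f id := by
    ext i j; simp [Matrix.mul_apply, Matrix.one_apply]
  have hQ : M.submatrix f id * (1 : Matrix (Fin l) (Fin l) F).submatrix id g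
      = M.submatrix f g := by
    ext i j; simp [Matrix.mul_apply, Matrix.one_apply]
  have hunit : IsUnit (M.submatrix f g) :=
    (Matrix.isUnit_iff_isUnit_det _).2 (isUnit_iff_ne_zero.2 hdet)
  have h1 : (M.submatrix f g).rank = r := by
    rw [Matrix.rank_of_isUnit _ hunit, Fintype.card_fin]
  calc r = (M.submatrix f g).rank := h1.symm
    _ = ((1 : Matrix (Fin k) (Fin k) F).submatrix f id * M
          * (1 : Matrix (Fin l) (Fin l) F).submatrix id g).rank := by rw [hP, hQ]
    _ ≤ ((1 : Matrix (Fin k) (Fin k) F).submatrix f id * M).rank :=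
        Matrix.rank_mul_le_left _ _
    _ ≤ M.rank := Matrix.rank_mul_le_right _ _

/-- A matrix of rank at least `r` has `r` linearly independent columns. -/
lemma aux_exists_indep_cols {k l r : ℕ} (M : Matrix (Fin k) (Fin l) F)
    (h : r ≤ M.rank) : ∃ g : Fin r → Fin l, LinearIndependent F (fun j => Mᵀ (g j)) := by
  classical
  obtain ⟨b, hbt, hspan, hli⟩ := exists_linearIndependent F (Set.range Mᵀ)
  have hfin : b.Finite := (Set.finite_range Mᵀ).subset hbt
  haveI := hfin.fintype
  have hcard : r ≤ Fintype.card b := by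
    have h1 : M.rank = Module.finrank F (Submodule.span F b) := by
      rw [Matrix.rank_eq_finrank_span_cols, hspan]; rfl
    rw [h1, finrank_span_set_eq_card hli] at h
    simpa [Set.toFinset_card] using h
  obtain ⟨emb⟩ : Nonempty (Fin r ↪ b) :=
    Function.Embedding.nonempty_of_card_le (by simpa using hcard)
  have hmem : ∀ j : Fin r, ∃ i, Mᵀ i = (emb j : Fin k → F) := fun j => hbt (emb j).2
  choose g hg using hmem
  refine ⟨g, ?_⟩
  have hind : LinearIndependent F (fun j : Fin r => ((emb j : b) : Fin k → F)) :=
    hli.comp emb emb.injective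
  rwa [show (fun j : Fin r => ((emb j : b) : Fin k → F)) = fun j => Mᵀ (g j) from
    funext fun j => (hg j).symm] at hind

/-- A matrix of rank at least `r` has a nonzero `r × r` minor. -/
lemma aux_exists_minor {k l r : ℕ} (M : Matrix (Fin k) (Fin l) F)
    (h : r ≤ M.rank) :
    ∃ (f : Fin r → Fin k) (g : Fin r → Fin l), (M.submatrix f g).det ≠ 0 := by
  classical
  obtain ⟨g, hg⟩ := aux_exists_indep_cols M h
  set N : Matrix (Fin k) (Fin r) F := M.submatrix id g with hN
  have hNr : N.rank = r := by
    rw [Matrix.rank_eq_finrank_span_cols]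
    have hrange : Set.range N.col = Set.range (fun j => Mᵀ (g j)) := rfl
    rw [hrange, finrank_span_eq_card hg, Fintype.card_fin]
  have h2 : r ≤ Nᵀ.rank := by rw [Matrix.rank_transpose, hNr]
  obtain ⟨f, hf⟩ := aux_exists_indep_cols Nᵀ h2
  refine ⟨f, g, ?_⟩
  have hrows : LinearIndependent F (fun i => (M.submatrix f g) i) := hf
  have hunit : IsUnit (M.submatrix f g) :=
    Matrix.linearIndependent_rows_iff_isUnit.1 hrows
  intro h0
  have := (Matrix.isUnit_iff_isUnit_det _).1 hunit
  rw [h0] at this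
  exact not_isUnit_zero this

open Polynomial in
/-- The one-coefficient replacement step. -/
lemma aux_step {k l r : ℕ} {K : Type*} [Field K] (C M : Matrix (Fin k) (Fin l) K)
    (a : K) (S' : Finset K) (hS' : r + 1 ≤ S'.card)
    (h : r ≤ (a • C + M).rank) : ∃ s ∈ S', r ≤ (s • C + M).rank := by
  classical
  obtain ⟨f, g, hdet⟩ := aux_exists_minor _ h
  set A : Matrix (Fin r) (Fin r) K[X] :=
    (Polynomial.X : K[X]) • (C.submatrix f g).map Polynomial.C
      + (M.submatrix f g).map Polynomial.C with hA
  set p : K[X] := A.det with hp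
  have heval : ∀ t : K, p.eval t = ((t • C + M).submatrix f g).det := by
    intro t
    have h1 : Polynomial.evalRingHom t p
        = ((Polynomial.evalRingHom t).mapMatrix A).det := RingHom.map_det _ _
    have h2 : (Polynomial.evalRingHom t).mapMatrix A = (t • C + M).submatrix f g := by
      ext i j
      simp only [hA, RingHom.mapMatrix_apply, Matrix.map_apply, Matrix.add_apply,
        Matrix.smul_apply, smul_eq_mul, Matrix.submatrix_apply, coe_evalRingHom,
        Polynomial.eval_add, Polynomial.eval_mul, Polynomial.eval_X, Polynomial.eval_C]
    simpa [h2] using h1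
  have hdegA : ∀ i j : Fin r, (A i j).natDegree ≤ 1 := by
    intro i j
    have : A i j = Polynomial.X * Polynomial.C (C (f i) (g j))
        + Polynomial.C (M (f i) (g j)) := by
      simp [hA, Matrix.add_apply, Matrix.smul_apply, smul_eq_mul]
    rw [this]
    refine (Polynomial.natDegree_add_le _ _).trans ?_
    refine max_le ?_ (by simp)
    exact (Polynomial.natDegree_mul_le).trans (by simp)
  have hdeg : p.natDegree ≤ r := by
    rw [hp, Matrix.det_apply']
    refine Polynomial.natDegree_sum_le_of_forall_le _ _ ?_
    intro σ _
    refine (Polynomial.natDegree_mul_le).trans ?_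
    have h3 : (∏ i, A (σ i) i).natDegree ≤ r := by
      refine (Polynomial.natDegree_prod_le _ _).trans ?_
      calc ∑ i, (A (σ i) i).natDegree ≤ ∑ _i : Fin r, 1 :=
            Finset.sum_le_sum fun i _ => hdegA (σ i) i
        _ = r := by simp
    simpa using h3
  have hp0 : p ≠ 0 := by
    intro h0
    apply hdet
    rw [← heval a, h0, Polynomial.eval_zero]
  have hsub : ¬ (S' ⊆ p.roots.toFinset) := by
    intro hsub
    have h4 := Finset.card_le_card hsub
    have h5 : p.roots.toFinset.card ≤ r :=
      (Multiset.toFinset_card_le _).trans ((Polynomial.card_roots' p).trans hdeg)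
    omega
  obtain ⟨s, hs, hns⟩ := Finset.not_subset.1 hsub
  refine ⟨s, hs, ?_⟩
  refine aux_rank_ge_of_minor _ f g ?_
  rw [← heval s]
  intro h0
  exact hns (Multiset.mem_toFinset.2 ((Polynomial.mem_roots hp0).2 h0))

end Aux

/-- Data reduction: if `Σ aᵢ' Bᵢ` has rank at least `r` for some coefficients
`aᵢ'` in an extension field `K ⊇ F`, and `S ⊆ F` has at least `r + 1` elements,
then there are coefficients `aᵢ ∈ S` with `Σ aᵢ Bᵢ` of rank at least `r`. -/
theorem stmt14 {F K : Type*} [Field F] [Field K] [Algebra F K]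
    {k l m r : ℕ} (B : Fin m → Matrix (Fin k) (Fin l) F)
    (S : Finset F) (hS : r + 1 ≤ S.card)
    (a' : Fin m → K)
    (h : r ≤ (∑ i, a' i • (B i).map (algebraMap F K)).rank) :
    ∃ a : Fin m → F, (∀ i, a i ∈ S) ∧ r ≤ (∑ i, a i • B i).rank := by
  classical
  have hinj : Function.Injective (algebraMap F K) := (algebraMap F K).injective
  have hS' : r + 1 ≤ (S.image (algebraMap F K)).card := by
    rwa [Finset.card_image_of_injective _ hinj]
  have key : ∀ j : ℕ, ∃ a : Fin m → K,
      (∀ i : Fin m, (i : ℕ) < j → ∃ s ∈ S, a i = algebraMap F K s) ∧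
      r ≤ (∑ i, a i • (B i).map (algebraMap F K)).rank := by
    intro j
    induction j with
    | zero => exact ⟨a', fun i hi => absurd hi (Nat.not_lt_zero _), h⟩
    | succ j ih =>
      obtain ⟨a, ha1, ha2⟩ := ih
      by_cases hj : j < m
      · set i0 : Fin m := ⟨j, hj⟩ with hi0
        have hsplit : ∀ b : Fin m → K,
            ∑ i, b i • (B i).map (algebraMap F K)
              = b i0 • (B i0).map (algebraMap F K)
                + ∑ i ∈ Finset.univ.erase i0, b i • (B i).map (algebraMap F K) :=
          fun b => (Finset.add_sum_erase _ _ (Finset.mem_univ i0)).symm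
        rw [hsplit a] at ha2
        obtain ⟨s', hs'mem, hs'⟩ := aux_step ((B i0).map (algebraMap F K))
          (∑ i ∈ Finset.univ.erase i0, a i • (B i).map (algebraMap F K))
          (a i0) (S.image (algebraMap F K)) hS' ha2
        obtain ⟨s, hsS, rfl⟩ := Finset.mem_image.1 hs'mem
        refine ⟨Function.update a i0 (algebraMap F K s), ?_, ?_⟩
        · intro i hi
          rcases eq_or_ne i i0 with rfl | hne
          · exact ⟨s, hsS, by simp⟩
          · have : (i : ℕ) < j := by
              rcases Nat.lt_succ_iff_lt_or_eq.1 hi with h' | h'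
              · exact h'
              · exact absurd (Fin.ext h' : i = i0) hne
            obtain ⟨t, htS, ht⟩ := ha1 i this
            exact ⟨t, htS, by rwa [Function.update_of_ne hne]⟩
        · rw [hsplit (Function.update a i0 (algebraMap F K s))]
          have he : ∑ i ∈ Finset.univ.erase i0,
              Function.update a i0 (algebraMap F K s) i • (B i).map (algebraMap F K)
              = ∑ i ∈ Finset.univ.erase i0, a i • (B i).map (algebraMap F K) := by
            refine Finset.sum_congr rfl fun i hi => ?_
            rw [Function.update_of_ne (Finset.ne_of_mem_erase hi)]
          rw [Function.update_self, he]
          exact hs'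
      · exact ⟨a, fun i _ => ha1 i (lt_of_lt_of_le i.2 (not_lt.1 hj)), ha2⟩
  obtain ⟨aK, h1, h2⟩ := key m
  choose c hc1 hc2 using fun i : Fin m => h1 i i.2
  refine ⟨c, hc1, ?_⟩
  have hmap : (∑ i, c i • B i).map (algebraMap F K)
      = ∑ i, aK i • (B i).map (algebraMap F K) := by
    ext x y
    simp only [Matrix.map_apply, Matrix.sum_apply, Matrix.smul_apply, smul_eq_mul,
      map_sum, _root_.map_mul]
    exact Finset.sum_congr rfl fun i _ => by rw [hc2]
  rw [← hmap] at h2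
  obtain ⟨f, g, hdet⟩ := aux_exists_minor _ h2
  refine aux_rank_ge_of_minor _ f g ?_
  intro h0
  apply hdet
  rw [Matrix.submatrix_map, ← RingHom.mapMatrix_apply, ← RingHom.map_det, h0, map_zero]
end

section
/- Let F be a field of characteristic not 2 and let B ≤ M(3,F) be the 3-dimensional space of skew-symmetric 3×3 matrices (Aᵀ = −A). Then every matrix in B is singular (so rk(B) = 2 < 3), yet B has no shrunk subspace: there is no nonzero subspace U ≤ F³ with dim(B(U)) < dim(U). In particular the non-commutative rank of B is 3 while its commutative rank is 2. -/
open Matrix Module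

/-- The skew-symmetric matrix of the cross product with `b`. -/
private def cmAux {F : Type*} [Field F] (b : Fin 3 → F) : Matrix (Fin 3) (Fin 3) F :=
  !![0, -b 2, b 1; b 2, 0, -b 0; -b 1, b 0, 0]

private lemma cmAux_skew {F : Type*} [Field F] (b : Fin 3 → F) :
    (cmAux b)ᵀ = -(cmAux b) := by
  ext i j
  fin_cases i <;> fin_cases j <;> simp [cmAux]

private lemma cmAux_mulVec {F : Type*} [Field F] (b u : Fin 3 → F) :
    (cmAux b).mulVec u =
      ![b 1 * u 2 - b 2 * u 1, b 2 * u 0 - b 0 * u 2, b 0 * u 1 - b 1 * u 0] := by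
  funext i
  fin_cases i <;>
    simp [cmAux, Matrix.mulVec, dotProduct, Fin.sum_univ_three] <;> ring

/-- If a submodule of `F³` contains two linearly independent vectors, its finrank is `≥ 2`. -/
private lemma two_le_finrank {F : Type*} [Field F] (S : Submodule F (Fin 3 → F))
    (v w : Fin 3 → F) (hv : v ∈ S) (hw : w ∈ S)
    (hind : LinearIndependent F ![v, w]) : 2 ≤ finrank F S := by
  have hcard : finrank F (Submodule.span F (Set.range ![v, w])) = 2 := by
    rw [finrank_span_eq_card hind]; simp
  have hle : Submodule.span F (Set.range ![v, w]) ≤ S := by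
    rw [Submodule.span_le]
    rintro x ⟨i, rfl⟩
    fin_cases i <;> simpa
  calc 2 = finrank F (Submodule.span F (Set.range ![v, w])) := hcard.symm
    _ ≤ finrank F S := Submodule.finrank_mono hle

/-- The space `𝓑` of skew-symmetric `3×3` matrices over a field of
characteristic `≠ 2`: every matrix in `𝓑` is singular, the maximal rank is `2`,
yet `𝓑` has no shrunk subspace (no subspace `U` with `dim 𝓑(U) < dim U`); so
`ncrk(𝓑) = 3` while `rk(𝓑) = 2`. -/
theorem stmt15 {F : Type*} [Field F] (h2 : (2 : F) ≠ 0)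
    (𝓑 : Submodule F (Matrix (Fin 3) (Fin 3) F))
    (h𝓑 : ∀ B : Matrix (Fin 3) (Fin 3) F, B ∈ 𝓑 ↔ Bᵀ = -B) :
    (∀ B ∈ 𝓑, B.det = 0) ∧
    (∀ B ∈ 𝓑, B.rank ≤ 2) ∧
    (∃ B ∈ 𝓑, B.rank = 2) ∧
    (∀ U : Submodule F (Fin 3 → F),
      ¬ finrank F (Submodule.span F
          {w : Fin 3 → F | ∃ B ∈ 𝓑, ∃ u ∈ U, w = B.mulVec u}) < finrank F U) := by
  -- Part 1: determinants vanish
  have hdet : ∀ B ∈ 𝓑, B.det = 0 := by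
    intro B hB
    have h := (h𝓑 B).1 hB
    have h1 : B.det = -B.det := by
      calc B.det = Bᵀ.det := (Matrix.det_transpose B).symm
        _ = (-B).det := by rw [h]
        _ = -B.det := by rw [Matrix.det_neg]; norm_num
    have h2' : (2 : F) * B.det = 0 := by
      rw [two_mul]
      exact add_eq_zero_iff_eq_neg.mpr h1
    exact (mul_eq_zero.mp h2').resolve_left h2
  -- Part 2: rank ≤ 2
  have hrk : ∀ B ∈ 𝓑, B.rank ≤ 2 := by
    intro B hB
    obtain ⟨v, hv0, hv⟩ := Matrix.exists_mulVec_eq_zero_iff.mpr (hdet B hB)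
    have hker : 0 < finrank F (LinearMap.ker B.mulVecLin) := by
      rw [finrank_pos_iff]
      exact ⟨⟨⟨v, by simpa [Matrix.mulVecLin] using hv⟩, 0, by simpa using hv0⟩⟩
    have hrn := LinearMap.finrank_range_add_finrank_ker B.mulVecLin
    rw [Module.finrank_fin_fun] at hrn
    rw [Matrix.rank]
    omega
  refine ⟨hdet, hrk, ?_, ?_⟩
  -- Part 3: a rank 2 element
  · refine ⟨cmAux ![0, 0, 1], (h𝓑 _).2 (cmAux_skew _), ?_⟩
    have hmem : cmAux (![0, 0, 1] : Fin 3 → F) ∈ 𝓑 := (h𝓑 _).2 (cmAux_skew _)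
    refine le_antisymm (hrk _ hmem) ?_
    rw [Matrix.rank]
    have hv : (![0, 1, 0] : Fin 3 → F) ∈ LinearMap.range (cmAux ![0,0,1]).mulVecLin := by
      refine ⟨![1, 0, 0], ?_⟩
      have := cmAux_mulVec (![0,0,1] : Fin 3 → F) ![1,0,0]
      simp only [Matrix.mulVecLin_apply, this]
      funext i; fin_cases i <;> norm_num <;> rfl
    have hw : (![-1, 0, 0] : Fin 3 → F) ∈ LinearMap.range (cmAux ![0,0,1]).mulVecLin := by
      refine ⟨![0, 1, 0], ?_⟩
      have := cmAux_mulVec (![0,0,1] : Fin 3 → F) ![0,1,0]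
      simp only [Matrix.mulVecLin_apply, this]
      funext i; fin_cases i <;> norm_num <;> rfl
    refine two_le_finrank _ _ _ hv hw ?_
    rw [LinearIndependent.pair_iff]
    intro s t hst
    have h0 := congrFun hst 0
    have h1 := congrFun hst 1
    simp at h0 h1
    exact ⟨h1, h0⟩
  -- Part 4: no shrunk subspace
  · intro U hlt
    set S := Submodule.span F
        {w : Fin 3 → F | ∃ B ∈ 𝓑, ∃ u ∈ U, w = B.mulVec u} with hS
    have hmem : ∀ b : Fin 3 → F, ∀ u ∈ U,
        (![b 1 * u 2 - b 2 * u 1, b 2 * u 0 - b 0 * u 2, b 0 * u 1 - b 1 * u 0]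
          : Fin 3 → F) ∈ S := by
      intro b u hu
      apply Submodule.subset_span
      exact ⟨cmAux b, (h𝓑 _).2 (cmAux_skew b), u, hu, (cmAux_mulVec b u).symm⟩
    -- U is nontrivial since its finrank is positive
    have hUpos : 0 < finrank F U := lt_of_le_of_lt (Nat.zero_le _) hlt
    have hUne : U ≠ ⊥ := by
      intro hbot
      rw [hbot, finrank_bot] at hUpos
      exact lt_irrefl 0 hUpos
    obtain ⟨u, huU, hu0⟩ := Submodule.exists_mem_ne_zero_of_ne_bot hUne
    obtain ⟨i, hui⟩ : ∃ i, u i ≠ 0 := by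
      by_contra hc
      push_neg at hc
      exact hu0 (funext hc)
    -- S has finrank ≥ 2
    have h2S : 2 ≤ finrank F S := by
      fin_cases i
      · -- u 0 ≠ 0 : use e₁ × u and e₂ × u, coordinates 1, 2
        have hv := hmem ![0, 1, 0] u huU
        have hw := hmem ![0, 0, 1] u huU
        simp only [Matrix.cons_val_zero, Matrix.cons_val_one, Matrix.head_cons,
          Matrix.cons_val_two, Matrix.tail_cons, one_mul, zero_mul, sub_zero, zero_sub,
          mul_comm] at hv hw
        refine two_le_finrank _ _ _ hv hw ?_
        rw [LinearIndependent.pair_iff]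
        intro s t hst
        have h1 := congrFun hst 1
        have h2 := congrFun hst 2
        replace hui : u 0 ≠ 0 := by simpa using hui
        simp at h1 h2
        constructor <;> tauto
      · -- u 1 ≠ 0
        have hv := hmem ![0, 0, 1] u huU
        have hw := hmem ![1, 0, 0] u huU
        simp only [Matrix.cons_val_zero, Matrix.cons_val_one, Matrix.head_cons,
          Matrix.cons_val_two, Matrix.tail_cons, one_mul, zero_mul, sub_zero, zero_sub,
          mul_comm] at hv hw
        refine two_le_finrank _ _ _ hv hw ?_
        rw [LinearIndependent.pair_iff]
        intro s t hst
        have h0 := congrFun hst 0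
        have h2 := congrFun hst 2
        replace hui : u 1 ≠ 0 := by simpa using hui
        simp at h0 h2
        constructor <;> tauto
      · -- u 2 ≠ 0
        have hv := hmem ![1, 0, 0] u huU
        have hw := hmem ![0, 1, 0] u huU
        simp only [Matrix.cons_val_zero, Matrix.cons_val_one, Matrix.head_cons,
          Matrix.cons_val_two, Matrix.tail_cons, one_mul, zero_mul, sub_zero, zero_sub,
          mul_comm] at hv hw
        refine two_le_finrank _ _ _ hv hw ?_
        rw [LinearIndependent.pair_iff]
        intro s t hst
        have h0 := congrFun hst 0
        have h1 := congrFun hst 1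
        replace hui : u 2 ≠ 0 := by simpa using hui
        simp at h0 h1
        constructor <;> tauto
    have hU3 : finrank F U ≤ 3 := by
      have := Submodule.finrank_le U
      rwa [Module.finrank_fin_fun] at this
    rcases Nat.lt_or_ge (finrank F U) 3 with hU | hU
    · omega
    · -- finrank U = 3, so U = ⊤ and S = ⊤
      have hUeq : finrank F U = 3 := le_antisymm hU3 hU
      have hUtop : U = ⊤ := by
        apply Submodule.eq_top_of_finrank_eq
        rw [hUeq, Module.finrank_fin_fun]
      have hall : ∀ x, x ∈ U := by intro x; rw [hUtop]; trivial
      have he0 : (![1, 0, 0] : Fin 3 → F) ∈ S := by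
        have := hmem ![0, 1, 0] ![0, 0, 1] (hall _)
        simpa using this
      have he1 : (![0, 1, 0] : Fin 3 → F) ∈ S := by
        have := hmem ![0, 0, 1] ![1, 0, 0] (hall _)
        simpa using this
      have he2 : (![0, 0, 1] : Fin 3 → F) ∈ S := by
        have := hmem ![1, 0, 0] ![0, 1, 0] (hall _)
        simpa using this
      have hStop : S = ⊤ := by
        rw [Submodule.eq_top_iff']
        intro x
        have hx : x = x 0 • ![1, 0, 0] + x 1 • ![0, 1, 0] + x 2 • ![0, 0, 1] := by
          funext j; fin_cases j <;> simp
        rw [hx]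
        exact S.add_mem (S.add_mem (S.smul_mem _ he0) (S.smul_mem _ he1)) (S.smul_mem _ he2)
      rw [hStop, finrank_top, Module.finrank_fin_fun] at hlt
      omega
end

section
/- Let F be a field with |F| > n, let A, C ∈ M(n,F), and let B = span{A, C}. If there exists i ∈ [n] such that (B A^{-1})^i(0) ⊄ im(A) — i.e. the second Wong sequence of (A, B) escapes the image of A — then rk(A) < rk(B), i.e. some matrix of the form A + λC (λ ∈ F) or C has rank strictly greater than rk(A). -/
set_option maxRecDepth 10000

open Matrix Module

open Polynomial


lemma exists_submatrix_det_ne_zero {K : Type*} [Field K] {n m : ℕ}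
    (M : Matrix (Fin n) (Fin m) K) (h : LinearIndependent K (fun j => M.transpose j)) :
    ∃ T : Fin m → Fin n, (M.submatrix T id).det ≠ 0 := by
  have hrows : Submodule.span K (Set.range (fun i => M i)) = ⊤ := by
    apply Submodule.eq_top_of_finrank_eq
    have h1 : M.rank = m := by
      rw [M.rank_eq_finrank_span_cols, show M.col = fun j => M.transpose j from rfl]
      have := linearIndependent_iff_card_eq_finrank_span.mp h
      simpa [Set.finrank] using this.symm
    have h2 := M.rank_eq_finrank_span_row
    rw [h1] at h2
    simp [← h2]
    exact h2.symm
  obtain ⟨b, hb_sub, hb_span, hb_li⟩ := exists_linearIndependent K (Set.range (fun i => M i))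
  rw [hrows] at hb_span
  have hbfin : b.Finite := hb_li.setFinite
  have : Fintype b := hbfin.fintype
  have B : Basis b K (Fin m → K) := Basis.mk hb_li (by rw [Subtype.range_coe, hb_span])
  have hcard : Fintype.card b = m := by
    have := Module.finrank_eq_card_basis B
    simpa [Module.finrank_fin_fun] using this.symm
  let e : Fin m ≃ b := (Fintype.equivFinOfCardEq hcard).symm
  have hmem : ∀ j : Fin m, ∃ i, M i = (e j : Fin m → K) := fun j => hb_sub (e j).2
  choose T hT using hmem
  refine ⟨T, ?_⟩
  have hli : LinearIndependent K (fun j => (M.submatrix T id) j) := by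
    have : (fun j => (M.submatrix T id) j) = fun j => ((e j : Fin m → K)) := by
      funext j; funext k; simp [Matrix.submatrix, ← hT j]
    rw [this]
    exact hb_li.comp (fun j => e j) e.injective
  have := Matrix.linearIndependent_rows_iff_isUnit.mp hli
  exact ((Matrix.isUnit_iff_isUnit_det _).mp this).ne_zero

lemma wong_lift {F : Type*} [Field F] {n : ℕ} (A C : Matrix (Fin n) (Fin n) F) :
    ∀ j, ∀ w ∈ wongSeq (Submodule.span F {A, C}) A j,
      ∃ q : Fin n → F[X],
        (A.map Polynomial.C + (X : F[X]) • C.map Polynomial.C).mulVec q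
          = fun k => X ^ j * Polynomial.C (w k) := by
  set Mp := A.map Polynomial.C + (X : F[X]) • C.map Polynomial.C with hMp
  have hmapA : ∀ (D : Matrix (Fin n) (Fin n) F) (v : Fin n → F),
      (D.map Polynomial.C).mulVec (fun k => Polynomial.C (v k))
        = fun i => Polynomial.C (D.mulVec v i) := by
    intro D v; funext i
    exact (RingHom.map_mulVec Polynomial.C D v i).symm
  intro j
  induction j with
  | zero =>
    intro w hw
    have hw0 : w = 0 := by simpa [wongSeq] using hw
    subst hw0
    exact ⟨0, by funext k; simp⟩
  | succ j ih =>
    intro w hw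
    rw [show wongSeq (Submodule.span F {A, C}) A (j+1) = Submodule.span F
      {w : Fin n → F | ∃ B ∈ Submodule.span F {A, C}, ∃ v : Fin n → F,
        A.mulVec v ∈ wongSeq (Submodule.span F {A, C}) A j ∧ w = B.mulVec v} from rfl] at hw
    induction hw using Submodule.span_induction with
    | mem x h =>
      obtain ⟨B, hB, v, hAv, rfl⟩ := h
      obtain ⟨a, b, rfl⟩ := Submodule.mem_span_pair.mp hB
      obtain ⟨q0, hq0⟩ := ih _ hAv
      refine ⟨Polynomial.C a • ((X : F[X]) • q0)
        + Polynomial.C b • ((X : F[X]) ^ j • (fun k => Polynomial.C (v k)) - q0), ?_⟩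
      have h1 : Mp.mulVec (fun k => Polynomial.C (v k))
          = (fun i => Polynomial.C (A.mulVec v i)) + (X : F[X]) • fun i => Polynomial.C (C.mulVec v i) := by
        rw [hMp, Matrix.add_mulVec, Matrix.smul_mulVec, hmapA, hmapA]
      simp only [Matrix.mulVec_add, Matrix.mulVec_smul, Matrix.mulVec_sub]
      rw [h1, hq0]
      funext k
      have : (a • A + b • C).mulVec v = a • A.mulVec v + b • C.mulVec v := by
        rw [Matrix.add_mulVec, Matrix.smul_mulVec, Matrix.smul_mulVec]
      simp only [this, Pi.add_apply, Pi.smul_apply, Pi.sub_apply, smul_eq_mul, map_add,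
        Polynomial.C_mul]
      ring
    | zero => exact ⟨0, by funext k; simp⟩
    | add x y hx hy ihx ihy =>
      obtain ⟨qx, hqx⟩ := ihx
      obtain ⟨qy, hqy⟩ := ihy
      refine ⟨qx + qy, ?_⟩
      rw [Matrix.mulVec_add, hqx, hqy]
      funext k; simp [mul_add]
    | smul a x hx ihx =>
      obtain ⟨qx, hqx⟩ := ihx
      refine ⟨Polynomial.C a • qx, ?_⟩
      rw [Matrix.mulVec_smul, hqx]
      funext k; simp; ring

lemma li_poly_cols {F : Type*} [Field F] {n m : ℕ} (a b : Fin m → Fin n → F)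
    (ha : LinearIndependent F a) :
    LinearIndependent F[X]
      (fun j => fun k => Polynomial.C (a j k) + Polynomial.C (b j k) * X) := by
  rw [Fintype.linearIndependent_iff]
  intro g hg
  have key : ∀ m0 : ℕ, ∀ j, (g j).coeff m0 = 0 := by
    intro m0
    induction m0 using Nat.strong_induction_on with
    | _ m0 IH =>
      have hcoeff : ∀ k, ∑ j, (a j k) * (g j).coeff m0 = 0 := by
        intro k
        have h0 : ∑ j, g j * (Polynomial.C (a j k) + Polynomial.C (b j k) * X) = 0 := by
          have := congrFun hg k
          simpa [Finset.sum_apply, smul_eq_mul] using this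
        have h1 := congrArg (fun p => Polynomial.coeff p m0) h0
        simp only [Polynomial.finset_sum_coeff, Polynomial.coeff_zero] at h1
        rw [← h1]
        refine Finset.sum_congr rfl fun j _ => ?_
        have hre : g j * (Polynomial.C (a j k) + Polynomial.C (b j k) * X)
            = Polynomial.C (a j k) * g j + Polynomial.C (b j k) * (g j * X) := by ring
        rw [hre]
        rcases m0 with _ | m1
        · simp
        · simp [Polynomial.coeff_C_mul, Polynomial.coeff_mul_X,
            IH m1 (Nat.lt_succ_self m1)]
      have hvec : ∑ j, (g j).coeff m0 • a j = 0 := by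
        funext k
        rw [Finset.sum_apply]
        simp only [Pi.smul_apply, smul_eq_mul, Pi.zero_apply]
        rw [← hcoeff k]
        exact Finset.sum_congr rfl fun j _ => mul_comm _ _
      exact fun j => Fintype.linearIndependent_iff.mp ha (fun j => (g j).coeff m0) hvec j
  intro j
  exact Polynomial.ext fun m0 => (key m0 j).trans (Polynomial.coeff_zero m0).symm

lemma det_natDegree_le' {F : Type*} [Field F] {m : ℕ} (Q : Matrix (Fin m) (Fin m) F[X])
    (d : Fin m → ℕ) (h : ∀ i j, (Q i j).natDegree ≤ d j) :
    Q.det.natDegree ≤ ∑ j, d j := by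
  rw [Matrix.det_apply]
  refine Polynomial.natDegree_sum_le_of_forall_le _ _ fun σ _ => ?_
  have hs : (Equiv.Perm.sign σ • ∏ i, Q (σ i) i).natDegree = (∏ i, Q (σ i) i).natDegree := by
    rcases Int.units_eq_one_or (Equiv.Perm.sign σ) with h1 | h1 <;>
      simp [h1, Units.smul_def, Polynomial.natDegree_neg]
  rw [hs]
  refine (Polynomial.natDegree_prod_le _ _).trans ?_
  exact Finset.sum_le_sum fun i _ => h (σ i) i

lemma li_map_fraction {F : Type*} [Field F] {n m : ℕ} (c : Fin m → Fin n → F[X])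
    (h : LinearIndependent F[X] c) :
    LinearIndependent (FractionRing F[X])
      (fun j => fun k => algebraMap F[X] (FractionRing F[X]) (c j k)) := by
  set K := FractionRing F[X]
  let f : (Fin n → F[X]) →ₗ[F[X]] (Fin n → K) :=
    LinearMap.pi (fun k => (Algebra.linearMap F[X] K).comp (LinearMap.proj k))
  have hker : LinearMap.ker f = ⊥ := by
    rw [LinearMap.ker_eq_bot]
    intro x y hxy
    funext k
    have := congrFun hxy k
    exact IsFractionRing.injective F[X] K this
  have h2 : LinearIndependent F[X] (f ∘ c) := h.map' f hker
  exact (LinearIndependent.iff_fractionRing F[X] K).mp h2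

lemma evalentry {F : Type*} [Field F] (lam α β : F) :
    Polynomial.eval lam (Polynomial.C α + Polynomial.C β * X) = α + lam * β := by
  simp; ring

lemma evalentry' {F : Type*} [Field F] (lam α β : F) :
    Polynomial.eval lam (Polynomial.C α + X * Polynomial.C β) = α + lam * β := by
  simp; ring


/-- If `|F| > n` and the second Wong sequence of `(A, span{A,C})` escapes
`im(A)` at some step `i ∈ [n]`, then `A` does not have maximal rank in the
pencil: some `A + λC` or `C` has rank strictly larger than `rk(A)`. -/
theorem stmt19 {F : Type*} [Field F] {n : ℕ} (hF : (n : Cardinal) < Cardinal.mk F)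
    (A C : Matrix (Fin n) (Fin n) F)
    (hescape : ∃ i : ℕ, 1 ≤ i ∧ i ≤ n ∧
      ¬ wongSeq (Submodule.span F {A, C}) A i ≤ LinearMap.range A.mulVecLin) :
    (∃ lam : F, A.rank < (A + lam • C).rank) ∨ A.rank < C.rank := by
  classical
  left
  obtain ⟨i, hi1, hin, hniW⟩ := hescape
  rw [SetLike.le_def] at hniW
  push_neg at hniW
  obtain ⟨w, hwW, hwA⟩ := hniW
  set R := LinearMap.range A.mulVecLin with hRdef
  set r := finrank F R with hrdef
  have hrankA : A.rank = r := rfl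
  -- r < n
  have hrn : r + 1 ≤ n := by
    have hRlt : R < ⊤ := lt_top_iff_ne_top.mpr (fun h => hwA (h ▸ Submodule.mem_top))
    have := Submodule.finrank_lt (K := F) (V := Fin n → F) hRlt.ne
    rw [Module.finrank_fin_fun] at this
    omega
  -- basis of R and preimages
  let bR : Basis (Fin r) F R := Module.finBasis F R
  let u : Fin r → (Fin n → F) := fun t => (bR t : Fin n → F)
  have hu_mem : ∀ t, u t ∈ R := fun t => (bR t).2
  have hz : ∀ t, ∃ z : Fin n → F, A.mulVec z = u t := by
    intro t
    obtain ⟨z, hz⟩ := hu_mem t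
    exact ⟨z, hz⟩
  choose z hz using hz
  -- span of u is R
  have hspanu : Submodule.span F (Set.range u) = R := by
    have h1 : Set.range u = R.subtype '' Set.range bR := by
      rw [← Set.range_comp]; rfl
    rw [h1, ← Submodule.map_span, bR.span_eq, Submodule.map_subtype_top]
  have hu_li : LinearIndependent F u :=
    bR.linearIndependent.map' R.subtype (Submodule.ker_subtype R)
  -- the full independent family
  let ya : Fin (r+1) → Fin n → F := Fin.cons w u
  let yb : Fin (r+1) → Fin n → F := Fin.cons 0 (fun t => C.mulVec (z t))
  have hLI : LinearIndependent F ya := by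
    refine linearIndependent_fin_cons.mpr ⟨hu_li, ?_⟩
    rw [hspanu]; exact hwA
  -- polynomial matrix
  let D : Matrix (Fin n) (Fin (r+1)) F[X] :=
    fun k j => Polynomial.C (ya j k) + Polynomial.C (yb j k) * X
  have hliD : LinearIndependent F[X] (fun j => D.transpose j) := li_poly_cols ya yb hLI
  -- to fraction field
  set K := FractionRing F[X] with hK
  have hliDK : LinearIndependent K (fun j => (D.map (algebraMap F[X] K)).transpose j) :=
    li_map_fraction (fun j k => D k j) hliD
  obtain ⟨T, hT⟩ := exists_submatrix_det_ne_zero (D.map (algebraMap F[X] K)) hliDK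
  -- the determinant polynomial
  set h0 : F[X] := (D.submatrix T id).det with hh0
  have hh0ne : h0 ≠ 0 := by
    intro hc
    apply hT
    have heq : (D.map (algebraMap F[X] K)).submatrix T id = (D.submatrix T id).map (algebraMap F[X] K) := rfl
    have hmd := RingHom.map_det (algebraMap F[X] K) (D.submatrix T id)
    rw [RingHom.mapMatrix_apply] at hmd
    rw [heq, ← hmd, show (D.submatrix T id).det = h0 from rfl, hc, map_zero]
  have hdeg : h0.natDegree ≤ r := by
    have := det_natDegree_le' (D.submatrix T id) (Fin.cons 0 (fun _ => 1)) ?_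
    · simpa using this
    · intro k j
      refine Fin.cases ?_ ?_ j
      · simp [D, ya, yb, Matrix.submatrix]
      · intro t
        simp only [Fin.cons_succ, Matrix.submatrix_apply, D, Matrix.submatrix, Matrix.of_apply]
        refine (Polynomial.natDegree_add_le _ _).trans ?_
        simp only [Polynomial.natDegree_C, Nat.zero_le, max_le_iff, true_and]
        refine (Polynomial.natDegree_C_mul_le _ _).trans ?_
        simp
  -- choose lambda
  let bad : Finset F := insert 0 h0.roots.toFinset
  have hbadcard : bad.card ≤ n := by
    have h1 : h0.roots.toFinset.card ≤ h0.roots.card := h0.roots.toFinset_card_le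
    have h2 : h0.roots.card ≤ h0.natDegree := by
      simpa using Polynomial.card_roots' h0
    have h3 : bad.card ≤ h0.roots.toFinset.card + 1 := Finset.card_insert_le _ _
    omega
  have hex : ∃ lam : F, lam ∉ bad := by
    by_contra hc
    push_neg at hc
    have h1 : Cardinal.mk F ≤ Cardinal.mk bad :=
      Cardinal.mk_le_of_injective (f := fun x => (⟨x, hc x⟩ : bad))
        (fun x y hxy => congrArg Subtype.val hxy)
    rw [Cardinal.mk_coe_finset] at h1
    have h2 : (bad.card : Cardinal) ≤ (n : Cardinal) := by exact_mod_cast hbadcard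
    exact absurd ((h1.trans h2).trans_lt hF) (lt_irrefl _)
  obtain ⟨lam, hlam⟩ := hex
  have hlam0 : lam ≠ 0 := fun hc => hlam (by simp [bad, hc])
  have hleval : Polynomial.eval lam h0 ≠ 0 := by
    intro hc
    exact hlam (by simp [bad, Multiset.mem_toFinset, Polynomial.mem_roots, hh0ne, hc,
      Polynomial.IsRoot.def])
  refine ⟨lam, ?_⟩
  set P := A + lam • C with hP
  -- evaluated matrix
  let El : Matrix (Fin n) (Fin (r+1)) F := fun k j => ya j k + lam * yb j k
  have hEl : D.map (Polynomial.eval lam) = El := by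
    funext k j
    exact evalentry lam (ya j k) (yb j k)
  -- det of evaluated submatrix
  have hdetEl : (El.submatrix T id).det ≠ 0 := by
    have h1 : El.submatrix T id = (D.submatrix T id).map (Polynomial.eval lam) := by
      rw [← hEl]; rfl
    have hmd := RingHom.map_det (Polynomial.evalRingHom lam) (D.submatrix T id)
    rw [RingHom.mapMatrix_apply] at hmd
    rw [h1, ← Polynomial.coe_evalRingHom, ← hmd]
    simpa using hleval
  have hUnit : IsUnit (El.submatrix T id) :=
    (Matrix.isUnit_iff_isUnit_det _).mpr (isUnit_iff_ne_zero.mpr hdetEl)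
  have hliSub : LinearIndependent F (fun j => (El.submatrix T id).transpose j) :=
    Matrix.linearIndependent_cols_iff_isUnit.mpr hUnit
  have hliE : LinearIndependent F (fun j => El.transpose j) := by
    refine LinearIndependent.of_comp (LinearMap.funLeft F F T) ?_
    exact hliSub
  -- columns in range of P
  have hcol : ∀ j, El.transpose j ∈ LinearMap.range P.mulVecLin := by
    intro j
    refine Fin.cases ?_ ?_ j
    · -- w column
      obtain ⟨q, hq⟩ := wong_lift A C i w hwW
      have heval : P.mulVec (fun k => Polynomial.eval lam (q k)) = lam ^ i • w := by
        funext k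
        have h1 := congrArg (Polynomial.eval lam) (congrFun hq k)
        rw [Polynomial.eval_mul, Polynomial.eval_pow, Polynomial.eval_X,
          Polynomial.eval_C] at h1
        have hMpmap : (A.map Polynomial.C + (X : F[X]) • C.map Polynomial.C).map
            (Polynomial.eval lam) = P := by
          funext a b2
          exact evalentry' lam (A a b2) (C a b2)
        have h2 : Polynomial.eval lam (((A.map Polynomial.C + (X : F[X]) • C.map Polynomial.C).mulVec q) k)
            = P.mulVec (fun k => Polynomial.eval lam (q k)) k := by
          rw [← Polynomial.coe_evalRingHom, RingHom.map_mulVec, Polynomial.coe_evalRingHom, hMpmap]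
          rfl
        rw [h2] at h1
        rw [h1]
        simp
      refine ⟨(lam ^ i)⁻¹ • (fun k => Polynomial.eval lam (q k)), ?_⟩
      rw [Matrix.mulVecLin_apply, Matrix.mulVec_smul, heval, smul_smul,
        inv_mul_cancel₀ (pow_ne_zero i hlam0), one_smul]
      funext k
      simp [El, ya, yb, Matrix.transpose]
    · -- basis columns
      intro t
      refine ⟨z t, ?_⟩
      rw [Matrix.mulVecLin_apply]
      funext k
      have : P.mulVec (z t) = A.mulVec (z t) + lam • C.mulVec (z t) := by
        rw [hP, Matrix.add_mulVec, Matrix.smul_mulVec]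
      rw [this, hz t]
      simp [El, ya, yb, u, Matrix.transpose]
  -- conclude
  have hspanle : Submodule.span F (Set.range (fun j => El.transpose j)) ≤ LinearMap.range P.mulVecLin := by
    rw [Submodule.span_le]
    rintro x ⟨j, rfl⟩
    exact hcol j
  have hfr : finrank F (Submodule.span F (Set.range (fun j => El.transpose j))) = r + 1 := by
    have := linearIndependent_iff_card_eq_finrank_span.mp hliE
    simpa [Set.finrank] using this.symm
  have hmono := Submodule.finrank_mono hspanle
  rw [hfr] at hmono
  rw [hrankA]
  calc r < r + 1 := Nat.lt_succ_self r
    _ ≤ finrank F (LinearMap.range P.mulVecLin) := hmono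
    _ = P.rank := rfl
end
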